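/- Let r_1,…,r_k ∈ ℝ² and q_1,…,q_ℓ ∈ ℝ² (k, ℓ ≥ 1) be substochastic row vectors, and define F : ℝ² → ℝ² by F(v) = (max_{1≤i≤k} ⟨r_i, v⟩, max_{1≤j≤ℓ} ⟨q_j, v⟩), which is the componentwise maximum of M_{i,j}·v over the product family of 2×2 matrices M_{i,j} with first row r_i and second row q_j. Then for every ε ∈ ℝ², at least one of the following holds: (1) F^n(ε) ≠ 0 for all n ≥ 0; (2) F²(ε) is comparable with the zero vector 0. -/

import Mathlib

lemma aux_ratio (v0 v1 w0 w1 Q0 Q1 R0 R1 : ℝ)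
    (hQ0 : 0 ≤ Q0) (hQ1 : 0 ≤ Q1) (hR0 : 0 ≤ R0) (hR1 : 0 ≤ R1)
    (hv0 : v0 < 0) (hv1 : 0 < v1) (hw0 : w0 < 0) (hw1 : 0 < w1)
    (hQv : 0 < Q0 * v0 + Q1 * v1) (hQw : Q0 * w0 + Q1 * w1 < 0)
    (hRv : R0 * v0 + R1 * v1 < 0) (hRw : 0 ≤ R0 * w0 + R1 * w1) : False := by
  have hQ1p : 0 < Q1 := by nlinarith
  have hQ0p : 0 < Q0 := by nlinarith
  have hR0p : 0 < R0 := by nlinarith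
  have hR1p : 0 < R1 := by nlinarith
  have k1 : (Q0 * (-v0)) * (Q1 * w1) < (Q1 * v1) * (Q0 * (-w0)) :=
    mul_lt_mul'' (by linarith) (by linarith) (mul_nonneg hQ0 (by linarith)) (mul_nonneg hQ1 hw1.le)
  have key1 : (-v0) * w1 < v1 * (-w0) := by
    by_contra hcon
    push_neg at hcon
    nlinarith [mul_pos hQ0p hQ1p, k1]
  have k2 : (R1 * v1) * (R0 * (-w0)) ≤ (R0 * (-v0)) * (R1 * w1) :=
    mul_le_mul (by linarith) (by linarith) (mul_nonneg hR0 (by linarith)) (mul_nonneg hR0 (by linarith))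
  have key2 : v1 * (-w0) ≤ (-v0) * w1 := by
    by_contra hcon
    push_neg at hcon
    nlinarith [mul_pos hR0p hR1p, k2]
  linarith

lemma aux_A (x0 x1 y0 y1 A0 A1 B0 B1 : ℝ)
    (hA0 : 0 ≤ A0) (hA1 : 0 ≤ A1) (hB0 : 0 ≤ B0) (hB1 : 0 ≤ B1)
    (hx0 : 0 < x0) (hx1 : x1 < 0) (hy1 : y1 < 0)
    (hA : A0 * x0 + A1 * x1 ≤ 0) (hAy : 0 < A0 * y0 + A1 * y1)
    (hB : B0 * x0 + B1 * x1 = 0) (hBy : B0 * y0 + B1 * y1 < 0) : False := by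
  have hA0p : 0 < A0 := by
    by_contra hcon
    push_neg at hcon
    have h0 : A0 = 0 := le_antisymm hcon hA0
    rw [h0] at hAy
    nlinarith
  have hT : 0 < A0 * (y0 * (-x1) - x0 * (-y1)) := by
    nlinarith [mul_pos hAy (show (0:ℝ) < -x1 by linarith),
               mul_le_mul_of_nonneg_right hA (show (0:ℝ) ≤ -y1 by linarith)]
  have key : x0 * (-y1) < y0 * (-x1) := by
    by_contra hcon
    push_neg at hcon
    nlinarith [mul_le_mul_of_nonneg_left hcon hA0]
  have hB1p : 0 < B1 := by
    by_contra hcon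
    push_neg at hcon
    have h1 : B1 = 0 := le_antisymm hcon hB1
    have h0 : B0 = 0 := by
      rw [h1] at hB
      by_contra hne
      have : 0 < B0 := lt_of_le_of_ne hB0 (Ne.symm hne)
      nlinarith
    rw [h0, h1] at hBy
    nlinarith
  have hBy0 : (B0 * x0 + B1 * x1) * y0 = 0 := by rw [hB]; ring
  nlinarith [mul_lt_mul_of_pos_right hBy hx0, mul_lt_mul_of_pos_left key hB1p, hBy0]

set_option maxHeartbeats 2000000 in
theorem stmt_16
    (k l : ℕ)
    (r : Fin (k + 1) → Fin 2 → ℝ) (q : Fin (l + 1) → Fin 2 → ℝ)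
    (hr : ∀ i, (∀ j, 0 ≤ r i j) ∧ ∑ j, r i j ≤ 1)
    (hq : ∀ i, (∀ j, 0 ≤ q i j) ∧ ∑ j, q i j ≤ 1)
    (F : (Fin 2 → ℝ) → (Fin 2 → ℝ))
    (hF₁ : ∀ v, F v 0 = Finset.univ.sup' Finset.univ_nonempty (fun i => ∑ j, r i j * v j))
    (hF₂ : ∀ v, F v 1 = Finset.univ.sup' Finset.univ_nonempty (fun i => ∑ j, q i j * v j))
    (ε : Fin 2 → ℝ) :
    (∀ n : ℕ, F^[n] ε ≠ 0) ∨ (F^[2] ε ≤ 0 ∨ 0 ≤ F^[2] ε)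
  := by
  by_cases hc : (F^[2] ε ≤ 0 ∨ 0 ≤ F^[2] ε)
  · exact Or.inr hc
  left
  push_neg at hc
  obtain ⟨hc1, hc2⟩ := hc
  have hupos : ∃ i : Fin 2, 0 < F^[2] ε i := by
    by_contra hh
    push_neg at hh
    exact hc1 (by intro i; simpa using hh i)
  have huneg : ∃ i : Fin 2, F^[2] ε i < 0 := by
    by_contra hh
    push_neg at hh
    exact hc2 (by intro i; simpa using hh i)
  have hu : (0 < F^[2] ε 0 ∧ F^[2] ε 1 < 0) ∨ (F^[2] ε 0 < 0 ∧ 0 < F^[2] ε 1) := by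
    obtain ⟨i1, hi1⟩ := hupos
    obtain ⟨i2, hi2⟩ := huneg
    fin_cases i1 <;> fin_cases i2
    · exact absurd hi2 (by simpa using hi1.le.not_gt)
    · exact Or.inl ⟨hi1, hi2⟩
    · exact Or.inr ⟨hi2, hi1⟩
    · exact absurd hi2 (by simpa using hi1.le.not_gt)
  clear hc1 hc2
  have hr0 : ∀ i, 0 ≤ r i 0 := fun i => (hr i).1 0
  have hr1 : ∀ i, 0 ≤ r i 1 := fun i => (hr i).1 1
  have hq0 : ∀ j, 0 ≤ q j 0 := fun j => (hq j).1 0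
  have hq1 : ∀ j, 0 ≤ q j 1 := fun j => (hq j).1 1
  have mnn : ∀ a b : ℝ, 0 ≤ a → b ≤ 0 → a * b ≤ 0 := fun a b ha hb => by nlinarith
  have mpp : ∀ a b : ℝ, 0 ≤ a → 0 ≤ b → 0 ≤ a * b := fun a b ha hb => mul_nonneg ha hb
  have hub0 : ∀ (y : Fin 2 → ℝ) (i : Fin (k+1)), r i 0 * y 0 + r i 1 * y 1 ≤ F y 0 := by
    intro y i
    rw [hF₁ y]
    have h := Finset.le_sup' (fun i => ∑ j, r i j * y j) (Finset.mem_univ i)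
    simpa only [Fin.sum_univ_two] using h
  have hub1 : ∀ (y : Fin 2 → ℝ) (j : Fin (l+1)), q j 0 * y 0 + q j 1 * y 1 ≤ F y 1 := by
    intro y j
    rw [hF₂ y]
    have h := Finset.le_sup' (fun j => ∑ i, q j i * y i) (Finset.mem_univ j)
    simpa only [Fin.sum_univ_two] using h
  have hex0 : ∀ y : Fin 2 → ℝ, ∃ i, F y 0 = r i 0 * y 0 + r i 1 * y 1 := by
    intro y
    obtain ⟨i, -, hi⟩ := Finset.exists_mem_eq_sup' Finset.univ_nonempty (fun i => ∑ j, r i j * y j)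
    exact ⟨i, by rw [hF₁ y, hi, Fin.sum_univ_two]⟩
  have hex1 : ∀ y : Fin 2 → ℝ, ∃ j, F y 1 = q j 0 * y 0 + q j 1 * y 1 := by
    intro y
    obtain ⟨j, -, hj⟩ := Finset.exists_mem_eq_sup' Finset.univ_nonempty (fun j => ∑ i, q j i * y i)
    exact ⟨j, by rw [hF₂ y, hj, Fin.sum_univ_two]⟩
  have hF00 : F 0 0 = 0 := by
    obtain ⟨i, hi⟩ := hex0 0
    rw [hi]
    simp
  have hF01 : F 0 1 = 0 := by
    obtain ⟨j, hj⟩ := hex1 0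
    rw [hj]
    simp
  have hF0 : F 0 = 0 := by
    funext i
    fin_cases i
    · simpa using hF00
    · simpa using hF01
  -- backward propagation of noncomparability
  have bwd : ∀ y : Fin 2 → ℝ,
      ((0 < F y 0 ∧ F y 1 < 0) ∨ (F y 0 < 0 ∧ 0 < F y 1)) →
      ((0 < y 0 ∧ y 1 < 0) ∨ (y 0 < 0 ∧ 0 < y 1)) := by
    intro y hy
    have hpos : 0 < y 0 ∨ 0 < y 1 := by
      by_contra hh
      push_neg at hh
      rcases hy with ⟨h0, -⟩ | ⟨-, h1⟩
      · obtain ⟨i, hi⟩ := hex0 y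
        rw [hi] at h0
        nlinarith [mnn _ _ (hr0 i) hh.1, mnn _ _ (hr1 i) hh.2]
      · obtain ⟨j, hj⟩ := hex1 y
        rw [hj] at h1
        nlinarith [mnn _ _ (hq0 j) hh.1, mnn _ _ (hq1 j) hh.2]
    have hneg : y 0 < 0 ∨ y 1 < 0 := by
      by_contra hh
      push_neg at hh
      rcases hy with ⟨-, h1⟩ | ⟨h0, -⟩
      · obtain ⟨j, hj⟩ := hex1 y
        rw [hj] at h1
        nlinarith [mpp _ _ (hq0 j) hh.1, mpp _ _ (hq1 j) hh.2]
      · obtain ⟨i, hi⟩ := hex0 y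
        rw [hi] at h0
        nlinarith [mpp _ _ (hr0 i) hh.1, mpp _ _ (hr1 i) hh.2]
    rcases hpos with hp | hp <;> rcases hneg with hn | hn
    · exact absurd hn hp.le.not_gt
    · exact Or.inl ⟨hp, hn⟩
    · exact Or.inr ⟨hn, hp⟩
    · exact absurd hn hp.le.not_gt
  -- suppose some iterate is zero; take the minimal one
  by_contra hcon
  push_neg at hcon
  have hn0 : F^[Nat.find hcon] ε = 0 := Nat.find_spec hcon
  set n := Nat.find hcon with hndef
  have hmin : ∀ m, m < n → F^[m] ε ≠ 0 := fun m hm => Nat.find_min hcon hm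
  have hn3 : 3 ≤ n := by
    by_contra hh
    push_neg at hh
    have h2 : F^[2] ε = 0 := by
      have h := Function.iterate_add_apply F (2 - n) n ε
      rw [hn0, Function.iterate_fixed hF0, show 2 - n + n = 2 by omega] at h
      exact h
    rcases hu with ⟨h, -⟩ | ⟨h, -⟩ <;> rw [h2] at h <;> simpa using h
  -- relations between consecutive iterates
  have hFx : F (F^[n-1] ε) = 0 := by
    have h := Function.iterate_succ_apply' F (n-1) ε
    simp only [Nat.succ_eq_add_one] at h
    rw [show n - 1 + 1 = n by omega] at h
    rw [← h]
    exact hn0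
  have hFw : F (F^[n-2] ε) = F^[n-1] ε := by
    have h := Function.iterate_succ_apply' F (n-2) ε
    simp only [Nat.succ_eq_add_one] at h
    rw [show n - 2 + 1 = n - 1 by omega] at h
    exact h.symm
  have hFv : F (F^[n-3] ε) = F^[n-2] ε := by
    have h := Function.iterate_succ_apply' F (n-3) ε
    simp only [Nat.succ_eq_add_one] at h
    rw [show n - 3 + 1 = n - 2 by omega] at h
    exact h.symm
  have hFp : F (F^[1] ε) = F^[2] ε := by
    have h := Function.iterate_succ_apply' F 1 ε
    simp only [Nat.succ_eq_add_one] at h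
    rw [show 1 + 1 = 2 by omega] at h
    exact h.symm
  have hxne : F^[n-1] ε ≠ 0 := hmin (n-1) (by omega)
  set x := F^[n-1] ε with hxdef
  set w := F^[n-2] ε with hwdef
  set v := F^[n-3] ε with hvdef
  set u := F^[2] ε with hudef
  set p := F^[1] ε with hpdef
  have hFx0 : F x 0 = 0 := by rw [hFx]; rfl
  have hFx1 : F x 1 = 0 := by rw [hFx]; rfl
  have hAr : ∀ i, r i 0 * x 0 + r i 1 * x 1 ≤ 0 := by
    intro i
    have h := hub0 x i
    rwa [hFx0] at h
  have hAq : ∀ j, q j 0 * x 0 + q j 1 * x 1 ≤ 0 := by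
    intro j
    have h := hub1 x j
    rwa [hFx1] at h
  have hEr : ∃ i, r i 0 * x 0 + r i 1 * x 1 = 0 := by
    obtain ⟨i, hi⟩ := hex0 x
    exact ⟨i, by rw [← hi]; exact hFx0⟩
  have hEq : ∃ j, q j 0 * x 0 + q j 1 * x 1 = 0 := by
    obtain ⟨j, hj⟩ := hex1 x
    exact ⟨j, by rw [← hj]; exact hFx1⟩
  have hallr_w : ∀ i, r i 0 * w 0 + r i 1 * w 1 ≤ x 0 := by
    intro i
    have h := hub0 w i
    rwa [hFw] at h
  have hallq_w : ∀ j, q j 0 * w 0 + q j 1 * w 1 ≤ x 1 := by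
    intro j
    have h := hub1 w j
    rwa [hFw] at h
  rcases lt_trichotomy (x 0) 0 with hx0 | hx0 | hx0 <;>
    rcases lt_trichotomy (x 1) 0 with hx1 | hx1 | hx1
  -- CASE 1 : x 0 < 0, x 1 < 0  (strictly negative)
  · obtain ⟨i0, hi0⟩ := hEr
    obtain ⟨j0, hj0⟩ := hEq
    have hri00 : r i0 0 = 0 := by
      have h1 := mnn _ _ (hr0 i0) hx0.le
      have h2 := mnn _ _ (hr1 i0) hx1.le
      by_contra hne
      have hp : 0 < r i0 0 := lt_of_le_of_ne (hr0 i0) (Ne.symm hne)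
      nlinarith
    have hri01 : r i0 1 = 0 := by
      have h1 := mnn _ _ (hr0 i0) hx0.le
      have h2 := mnn _ _ (hr1 i0) hx1.le
      by_contra hne
      have hp : 0 < r i0 1 := lt_of_le_of_ne (hr1 i0) (Ne.symm hne)
      nlinarith
    have hqj00 : q j0 0 = 0 := by
      have h1 := mnn _ _ (hq0 j0) hx0.le
      have h2 := mnn _ _ (hq1 j0) hx1.le
      by_contra hne
      have hp : 0 < q j0 0 := lt_of_le_of_ne (hq0 j0) (Ne.symm hne)
      nlinarith
    have hqj01 : q j0 1 = 0 := by
      have h1 := mnn _ _ (hq0 j0) hx0.le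
      have h2 := mnn _ _ (hq1 j0) hx1.le
      by_contra hne
      have hp : 0 < q j0 1 := lt_of_le_of_ne (hq1 j0) (Ne.symm hne)
      nlinarith
    have hu0 : 0 ≤ u 0 := by
      have h := hub0 p i0
      rw [hFp, hri00, hri01] at h
      simpa using h
    have hu1 : 0 ≤ u 1 := by
      have h := hub1 p j0
      rw [hFp, hqj00, hqj01] at h
      simpa using h
    rcases hu with ⟨-, h⟩ | ⟨h, -⟩ <;> linarith
  -- CASE 2 : x 0 < 0, x 1 = 0  (endgame pattern (-,0))
  · obtain ⟨jE, hjE⟩ := hEq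
    have hjE0 : q jE 0 = 0 := by
      rw [hx1] at hjE
      by_contra hne
      have hp : 0 < q jE 0 := lt_of_le_of_ne (hq0 jE) (Ne.symm hne)
      nlinarith
    obtain ⟨iE, hiE⟩ := hEr
    have hiE0 : r iE 0 = 0 := by
      rw [hx1] at hiE
      by_contra hne
      have hp : 0 < r iE 0 := lt_of_le_of_ne (hr0 iE) (Ne.symm hne)
      nlinarith
    have h1 : r iE 1 * w 1 ≤ x 0 := by
      have h := hallr_w iE
      rw [hiE0] at h
      linarith
    have hw1 : w 1 < 0 := by
      by_contra hh
      push_neg at hh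
      nlinarith [mpp _ _ (hr1 iE) hh]
    have hβ : 0 < q jE 1 := by
      rcases (hq1 jE).lt_or_eq with h | h
      · exact h
      · exfalso
        have hv1 := hub1 v jE
        rw [hFv, hjE0, ← h] at hv1
        simp at hv1
        nlinarith
    -- downward induction : second coordinates are ≤ 0 along the whole orbit
    have D : ∀ m : ℕ, F^[n-1-m] ε 1 ≤ 0 := by
      intro m
      induction m with
      | zero =>
        simp only [Nat.sub_zero]
        rw [← hxdef]
        exact le_of_eq hx1
      | succ m ih =>
        by_cases hm : n - 1 - m = 0
        · rw [show n - 1 - (m+1) = 0 by omega]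
          rw [hm] at ih
          exact ih
        · rw [show n - 1 - m = (n - 1 - (m+1)) + 1 by omega,
              Function.iterate_succ_apply'] at ih
          have h2 := hub1 (F^[n-1-(m+1)] ε) jE
          rw [hjE0] at h2
          nlinarith
    have hu1le : u 1 ≤ 0 := by
      have h := D (n-3)
      rwa [show n - 1 - (n-3) = 2 by omega, ← hudef] at h
    have hp1le : p 1 ≤ 0 := by
      have h := D (n-2)
      rwa [show n - 1 - (n-2) = 1 by omega, ← hpdef] at h
    have hv1le : v 1 ≤ 0 := by
      have h := D 2
      rwa [show n - 1 - 2 = n - 3 by omega, ← hvdef] at h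
    have huA : 0 < u 0 ∧ u 1 < 0 := by
      rcases hu with h | h
      · exact h
      · exact absurd h.2 (by linarith)
    have hpA : 0 < p 0 ∧ p 1 < 0 := by
      have h := bwd p (by rw [hFp]; exact Or.inl huA)
      rcases h with h | h
      · exact h
      · exact absurd h.2 (by linarith)
    obtain ⟨jR, hjR⟩ := hex1 w
    have hjRw : q jR 0 * w 0 + q jR 1 * w 1 = 0 := by
      rw [← hjR, hFw]
      exact hx1
    have hjRp1 : q jR 0 * p 0 + q jR 1 * p 1 ≤ u 1 := by
      have h := hub1 p jR
      rwa [hFp] at h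
    have hρ1 : 0 < q jR 1 := by
      rcases (hq1 jR).lt_or_eq with h | h
      · exact h
      · exfalso
        rw [← h] at hjRp1
        nlinarith [mpp _ _ (hq0 jR) hpA.1.le, huA.2]
    have hw0pos : 0 < w 0 := by
      by_contra hh
      push_neg at hh
      have h1 := mnn _ _ (hq0 jR) hh
      nlinarith [mul_neg_of_pos_of_neg hρ1 hw1]
    have hvA : 0 < v 0 ∧ v 1 < 0 := by
      have h := bwd v (by rw [hFv]; exact Or.inl ⟨hw0pos, hw1⟩)
      rcases h with h | h
      · exact h
      · exact absurd h.2 (by linarith)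
    obtain ⟨iA, hiA⟩ := hex0 v
    have hiAv : r iA 0 * v 0 + r iA 1 * v 1 = w 0 := by
      rw [← hiA, hFv]
    have hiAw : r iA 0 * w 0 + r iA 1 * w 1 ≤ x 0 := hallr_w iA
    have hjRv : q jR 0 * v 0 + q jR 1 * v 1 ≤ w 1 := by
      have h := hub1 v jR
      rwa [hFv] at h
    exact aux_ratio (v 1) (v 0) (w 1) (w 0) (r iA 1) (r iA 0) (q jR 1) (q jR 0)
      (hr1 iA) (hr0 iA) (hq1 jR) (hq0 jR)
      hvA.2 hvA.1 hw1 hw0pos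
      (by linarith) (by linarith) (by linarith) (by linarith)
  -- CASE 3 : x 0 < 0 < x 1  (x in B)
  · have hwnc := bwd w (by rw [hFw]; exact Or.inr ⟨hx0, hx1⟩)
    obtain ⟨jA, hjA⟩ := hex1 w
    have hjAw : q jA 0 * w 0 + q jA 1 * w 1 = x 1 := by rw [← hjA, hFw]
    rcases hwnc with hwA | hwB
    · -- w in A : long subcase, go one more level back
      have hvnc := bwd v (by rw [hFv]; exact Or.inl hwA)
      obtain ⟨iA, hiA⟩ := hex0 v
      have hiAv : r iA 0 * v 0 + r iA 1 * v 1 = w 0 := by rw [← hiA, hFv]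
      have hiAw : r iA 0 * w 0 + r iA 1 * w 1 ≤ x 0 := hallr_w iA
      have hjAv : q jA 0 * v 0 + q jA 1 * v 1 ≤ w 1 := by
        have h := hub1 v jA
        rwa [hFv] at h
      rcases hvnc with hvA | hvB
      · -- v in A : ratio lemma with swapped coordinates
        exact aux_ratio (v 1) (v 0) (w 1) (w 0) (r iA 1) (r iA 0) (q jA 1) (q jA 0)
          (hr1 iA) (hr0 iA) (hq1 jA) (hq0 jA)
          hvA.2 hvA.1 hwA.2 hwA.1
          (by linarith) (by linarith) (by linarith) (by linarith)
      · -- v in B : aux_A with swapped coordinates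
        obtain ⟨jE, hjE⟩ := hEq
        have hjEv : q jE 0 * v 0 + q jE 1 * v 1 ≤ w 1 := by
          have h := hub1 v jE
          rwa [hFv] at h
        exact aux_A (x 1) (x 0) (v 1) (v 0) (r iA 1) (r iA 0) (q jE 1) (q jE 0)
          (hr1 iA) (hr0 iA) (hq1 jE) (hq0 jE)
          hx1 hx0 hvB.1
          (by linarith [hAr iA]) (by linarith) (by linarith [hjE]) (by linarith)
    · -- w in B : short subcase
      obtain ⟨iE, hiE⟩ := hEr
      exact aux_A (x 1) (x 0) (w 1) (w 0) (q jA 1) (q jA 0) (r iE 1) (r iE 0)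
        (hq1 jA) (hq0 jA) (hr1 iE) (hr0 iE)
        hx1 hx0 hwB.1
        (by linarith [hAq jA]) (by linarith) (by linarith [hiE]) (by linarith [hallr_w iE])
  -- CASE 4 : x 0 = 0, x 1 < 0  (endgame pattern (0,-))
  · obtain ⟨iE, hiE⟩ := hEr
    have hiE1 : r iE 1 = 0 := by
      rw [hx0] at hiE
      by_contra hne
      have hp : 0 < r iE 1 := lt_of_le_of_ne (hr1 iE) (Ne.symm hne)
      nlinarith
    obtain ⟨jE, hjE⟩ := hEq
    have hjE1 : q jE 1 = 0 := by
      rw [hx0] at hjE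
      by_contra hne
      have hp : 0 < q jE 1 := lt_of_le_of_ne (hq1 jE) (Ne.symm hne)
      nlinarith
    have h1 : q jE 0 * w 0 ≤ x 1 := by
      have h := hallq_w jE
      rw [hjE1] at h
      linarith
    have hw0 : w 0 < 0 := by
      by_contra hh
      push_neg at hh
      nlinarith [mpp _ _ (hq0 jE) hh]
    have hβ : 0 < r iE 0 := by
      rcases (hr0 iE).lt_or_eq with h | h
      · exact h
      · exfalso
        have hv0 := hub0 v iE
        rw [hFv, hiE1, ← h] at hv0
        simp at hv0
        nlinarith
    have D : ∀ m : ℕ, F^[n-1-m] ε 0 ≤ 0 := by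
      intro m
      induction m with
      | zero =>
        simp only [Nat.sub_zero]
        rw [← hxdef]
        exact le_of_eq hx0
      | succ m ih =>
        by_cases hm : n - 1 - m = 0
        · rw [show n - 1 - (m+1) = 0 by omega]
          rw [hm] at ih
          exact ih
        · rw [show n - 1 - m = (n - 1 - (m+1)) + 1 by omega,
              Function.iterate_succ_apply'] at ih
          have h2 := hub0 (F^[n-1-(m+1)] ε) iE
          rw [hiE1] at h2
          nlinarith
    have hu0le : u 0 ≤ 0 := by
      have h := D (n-3)
      rwa [show n - 1 - (n-3) = 2 by omega, ← hudef] at h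
    have hp0le : p 0 ≤ 0 := by
      have h := D (n-2)
      rwa [show n - 1 - (n-2) = 1 by omega, ← hpdef] at h
    have hv0le : v 0 ≤ 0 := by
      have h := D 2
      rwa [show n - 1 - 2 = n - 3 by omega, ← hvdef] at h
    have huB : u 0 < 0 ∧ 0 < u 1 := by
      rcases hu with h | h
      · exact absurd h.1 (by linarith)
      · exact h
    have hpB : p 0 < 0 ∧ 0 < p 1 := by
      have h := bwd p (by rw [hFp]; exact Or.inr huB)
      rcases h with h | h
      · exact absurd h.1 (by linarith)
      · exact h
    obtain ⟨iR, hiR⟩ := hex0 w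
    have hiRw : r iR 0 * w 0 + r iR 1 * w 1 = 0 := by
      rw [← hiR, hFw]
      exact hx0
    have hiRp : r iR 0 * p 0 + r iR 1 * p 1 ≤ u 0 := by
      have h := hub0 p iR
      rwa [hFp] at h
    have hρ0 : 0 < r iR 0 := by
      rcases (hr0 iR).lt_or_eq with h | h
      · exact h
      · exfalso
        rw [← h] at hiRp
        nlinarith [mpp _ _ (hr1 iR) hpB.2.le, huB.1]
    have hw1pos : 0 < w 1 := by
      by_contra hh
      push_neg at hh
      have h1 := mnn _ _ (hr1 iR) hh
      nlinarith [mul_neg_of_pos_of_neg hρ0 hw0]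
    have hvB : v 0 < 0 ∧ 0 < v 1 := by
      have h := bwd v (by rw [hFv]; exact Or.inr ⟨hw0, hw1pos⟩)
      rcases h with h | h
      · exact absurd h.1 (by linarith)
      · exact h
    obtain ⟨jA, hjA⟩ := hex1 v
    have hjAv : q jA 0 * v 0 + q jA 1 * v 1 = w 1 := by rw [← hjA, hFv]
    have hjAw : q jA 0 * w 0 + q jA 1 * w 1 ≤ x 1 := hallq_w jA
    have hiRv : r iR 0 * v 0 + r iR 1 * v 1 ≤ w 0 := by
      have h := hub0 v iR
      rwa [hFv] at h
    exact aux_ratio (v 0) (v 1) (w 0) (w 1) (q jA 0) (q jA 1) (r iR 0) (r iR 1)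
      (hq0 jA) (hq1 jA) (hr0 iR) (hr1 iR)
      hvB.1 hvB.2 hw0 hw1pos
      (by linarith) (by linarith) (by linarith) (by linarith)
  -- CASE 5 : x 0 = 0, x 1 = 0
  · exact hxne (by funext i; fin_cases i <;> simpa [hx0, hx1])
  -- CASE 6 : x 0 = 0, 0 < x 1
  · have hr1z : ∀ i, r i 1 = 0 := by
      intro i
      have h := hAr i
      rw [hx0] at h
      have h1 : r i 1 ≤ 0 := by nlinarith
      exact le_antisymm h1 (hr1 i)
    have hq1z : ∀ j, q j 1 = 0 := by
      intro j
      have h := hAq j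
      rw [hx0] at h
      have h1 : q j 1 ≤ 0 := by nlinarith
      exact le_antisymm h1 (hq1 j)
    obtain ⟨i1, hi1⟩ := hex0 p
    obtain ⟨j1, hj1⟩ := hex1 p
    rw [hFp, hr1z i1] at hi1
    rw [hFp, hq1z j1] at hj1
    rcases hu with ⟨h0, h1⟩ | ⟨h0, h1⟩
    · have hp0 : 0 < p 0 := by
        by_contra hh
        push_neg at hh
        nlinarith [mnn _ _ (hr0 i1) hh]
      nlinarith [mpp _ _ (hq0 j1) hp0.le]
    · have hp0 : 0 < p 0 := by
        by_contra hh
        push_neg at hh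
        nlinarith [mnn _ _ (hq0 j1) hh]
      nlinarith [mpp _ _ (hr0 i1) hp0.le]
  -- CASE 7 : 0 < x 0, x 1 < 0  (x in A)
  · have hwnc := bwd w (by rw [hFw]; exact Or.inl ⟨hx0, hx1⟩)
    obtain ⟨iA, hiA⟩ := hex0 w
    have hiAw : r iA 0 * w 0 + r iA 1 * w 1 = x 0 := by rw [← hiA, hFw]
    rcases hwnc with hwA | hwB
    · -- w in A : short subcase
      obtain ⟨jE, hjE⟩ := hEq
      exact aux_A (x 0) (x 1) (w 0) (w 1) (r iA 0) (r iA 1) (q jE 0) (q jE 1)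
        (hr0 iA) (hr1 iA) (hq0 jE) (hq1 jE)
        hx0 hx1 hwA.2
        (hAr iA) (by linarith) hjE (by linarith [hallq_w jE])
    · -- w in B : long subcase
      have hvnc := bwd v (by rw [hFv]; exact Or.inr hwB)
      obtain ⟨jA, hjA⟩ := hex1 v
      have hjAv : q jA 0 * v 0 + q jA 1 * v 1 = w 1 := by rw [← hjA, hFv]
      have hjAw : q jA 0 * w 0 + q jA 1 * w 1 ≤ x 1 := hallq_w jA
      have hiAv : r iA 0 * v 0 + r iA 1 * v 1 ≤ w 0 := by
        have h := hub0 v iA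
        rwa [hFv] at h
      rcases hvnc with hvA | hvB
      · -- v in A : aux_A
        obtain ⟨iE, hiE⟩ := hEr
        have hiEv : r iE 0 * v 0 + r iE 1 * v 1 ≤ w 0 := by
          have h := hub0 v iE
          rwa [hFv] at h
        exact aux_A (x 0) (x 1) (v 0) (v 1) (q jA 0) (q jA 1) (r iE 0) (r iE 1)
          (hq0 jA) (hq1 jA) (hr0 iE) (hr1 iE)
          hx0 hx1 hvA.2
          (hAq jA) (by linarith) hiE (by linarith)
      · -- v in B : ratio lemma
        exact aux_ratio (v 0) (v 1) (w 0) (w 1) (q jA 0) (q jA 1) (r iA 0) (r iA 1)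
          (hq0 jA) (hq1 jA) (hr0 iA) (hr1 iA)
          hvB.1 hvB.2 hwB.1 hwB.2
          (by linarith) (by linarith) (by linarith) (by linarith)
  -- CASE 8 : 0 < x 0, x 1 = 0
  · have hr0z : ∀ i, r i 0 = 0 := by
      intro i
      have h := hAr i
      rw [hx1] at h
      have h1 : r i 0 ≤ 0 := by nlinarith
      exact le_antisymm h1 (hr0 i)
    have hq0z : ∀ j, q j 0 = 0 := by
      intro j
      have h := hAq j
      rw [hx1] at h
      have h1 : q j 0 ≤ 0 := by nlinarith
      exact le_antisymm h1 (hq0 j)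
    obtain ⟨i1, hi1⟩ := hex0 p
    obtain ⟨j1, hj1⟩ := hex1 p
    rw [hFp, hr0z i1] at hi1
    rw [hFp, hq0z j1] at hj1
    rcases hu with ⟨h0, h1⟩ | ⟨h0, h1⟩
    · have hp1 : 0 < p 1 := by
        by_contra hh
        push_neg at hh
        nlinarith [mnn _ _ (hr1 i1) hh]
      nlinarith [mpp _ _ (hq1 j1) hp1.le]
    · have hp1 : 0 < p 1 := by
        by_contra hh
        push_neg at hh
        nlinarith [mnn _ _ (hq1 j1) hh]
      nlinarith [mpp _ _ (hr1 i1) hp1.le]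
  -- CASE 9 : 0 < x 0, 0 < x 1
  · obtain ⟨i1, hi1⟩ := hex0 p
    have hri0 : r i1 0 = 0 ∧ r i1 1 = 0 := by
      have h := hAr i1
      constructor
      · have h1 : r i1 0 ≤ 0 := by nlinarith [mpp _ _ (hr1 i1) hx1.le]
        exact le_antisymm h1 (hr0 i1)
      · have h1 : r i1 1 ≤ 0 := by nlinarith [mpp _ _ (hr0 i1) hx0.le]
        exact le_antisymm h1 (hr1 i1)
    rw [hFp, hri0.1, hri0.2] at hi1
    rcases hu with ⟨h0, -⟩ | ⟨h0, -⟩ <;> rw [hi1] at h0 <;> nlinarith
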